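/- Let F be a field, n ≥ 1, K ≥ 2 an integer, and (m_1,...,m_n) an n-tuple of positive integers. Then the number of monomial ideals I of F[X_1,...,X_n] such that the quotient F[X_1,...,X_n]/I has dimension K over F and, for every i = 1,...,n, X_i^{m_i} ∈ I while X_i^{m_i−1} ∉ I, is at most (K + n − 2)^{(n−1)(K−1)} · (2K − 3)^{K−2}. -/

import Mathlib

open MvPolynomial

/-- An ideal of `F[X_1,…,X_n]` is a *monomial ideal* if it is generated by
a set of monomials `X^a = X_1^{a_1} ⋯ X_n^{a_n}`. -/
def IsMonomialIdeal {n : ℕ} {F : Type} [Field F] (I : Ideal (MvPolynomial (Fin n) F)) : Prop :=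
  ∃ S : Set (Fin n →₀ ℕ), I = Ideal.span ((fun a => (monomial a (1 : F))) '' S)


namespace Stmt5Aux

variable {n : ℕ}

/-- total degree of an exponent vector -/
def deg (a : Fin n →₀ ℕ) : ℕ := a.sum fun _ v => v

lemma deg_add (a b : Fin n →₀ ℕ) : deg (a + b) = deg a + deg b := by
  classical
  simpa [deg] using Finsupp.sum_add_index' (h := fun (_ : Fin n) (v : ℕ) => v)
    (fun _ => rfl) (fun _ _ _ => rfl)

lemma deg_eq_zero_iff (a : Fin n →₀ ℕ) : deg a = 0 ↔ a = 0 := by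
  classical
  constructor
  · intro h
    ext i
    simp only [Finsupp.coe_zero, Pi.zero_apply]
    by_contra hi
    have hmem : i ∈ a.support := Finsupp.mem_support_iff.2 (by simpa using hi)
    have : a i ≤ deg a := Finset.single_le_sum (f := fun i => a i) (fun _ _ => Nat.zero_le _) hmem
    omega
  · rintro rfl; simp [deg]

lemma deg_single (i : Fin n) : deg (Finsupp.single i 1) = 1 := by
  simp [deg, Finsupp.sum_single_index]

noncomputable def enc : (Fin n →₀ ℕ) → ℕ := (nonempty_embedding_nat (Fin n →₀ ℕ)).some

lemma enc_inj : Function.Injective (enc (n := n)) := (nonempty_embedding_nat _).some.injective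

noncomputable def key (a : Fin n →₀ ℕ) : Lex (ℕ × ℕ) := toLex (deg a, enc a)

lemma key_inj : Function.Injective (key (n := n)) := by
  intro a b h
  have := congrArg (fun x => (ofLex x).2) h
  exact enc_inj this

lemma key_lt_of_deg_lt {a b : Fin n →₀ ℕ} (h : deg a < deg b) : key a < key b := by
  rw [key, key, Prod.Lex.lt_iff]; exact Or.inl h

/-- the sorting relation -/
noncomputable def r (a b : Fin n →₀ ℕ) : Prop := key a ≤ key b

noncomputable instance : DecidableRel (r (n := n)) := Classical.decRel _
instance : IsTrans (Fin n →₀ ℕ) r := ⟨fun _ _ _ h1 h2 => le_trans h1 h2⟩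
instance : IsAntisymm (Fin n →₀ ℕ) r := ⟨fun _ _ h1 h2 => key_inj (le_antisymm h1 h2)⟩
instance : IsTotal (Fin n →₀ ℕ) r := ⟨fun _ _ => le_total _ _⟩
instance : IsRefl (Fin n →₀ ℕ) r := ⟨fun _ => le_refl _⟩

lemma r_zero (a : Fin n →₀ ℕ) : r 0 a := by
  rcases Nat.eq_zero_or_pos (deg a) with h | h
  · have : a = 0 := (deg_eq_zero_iff a).1 h
    rw [this]; exact le_refl _
  · exact le_of_lt (key_lt_of_deg_lt (by simpa [deg] using h))


/-- The valid "staircase" finsets -/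
def Valid (K : ℕ) (D : Finset (Fin n →₀ ℕ)) : Prop :=
  D.card = K ∧ (0 : Fin n →₀ ℕ) ∈ D ∧ ∀ a ∈ D, ∀ b ≤ a, b ∈ D

/-- The encoding map -/
noncomputable def E (hn : 0 < n) (K : ℕ) (D : Finset (Fin n →₀ ℕ)) (j : Fin (K - 1)) :
    Fin n × Fin (j.1 + 1) :=
  if h : ∃ i, (D.sort r).getD (j.1 + 1) 0 i ≠ 0 then
    (h.choose, ⟨((D.sort r).idxOf
        ((D.sort r).getD (j.1 + 1) 0 - Finsupp.single h.choose 1)) % (j.1 + 1),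
      Nat.mod_lt _ (Nat.succ_pos _)⟩)
  else (⟨0, hn⟩, ⟨0, Nat.succ_pos _⟩)

set_option maxHeartbeats 1000000 in
lemma E_spec (hn : 0 < n) (K : ℕ) (D : Finset (Fin n →₀ ℕ)) (j : Fin (K - 1))
    (h : ∃ i, (D.sort r).getD (j.1 + 1) 0 i ≠ 0) :
    E hn K D j = (h.choose, ⟨((D.sort r).idxOf
        ((D.sort r).getD (j.1 + 1) 0 - Finsupp.single h.choose 1)) % (j.1 + 1),
      Nat.mod_lt _ (Nat.succ_pos _)⟩) := dif_pos h

lemma sorted_getD_zero {K : ℕ} (hK : 0 < K) {D : Finset (Fin n →₀ ℕ)}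
    (hcard : D.card = K) (h0 : (0 : Fin n →₀ ℕ) ∈ D) :
    (D.sort r).getD 0 (0 : Fin n →₀ ℕ) = 0 := by
  classical
  set L := D.sort r with hL
  have hlen : L.length = K := by rw [hL, Finset.length_sort, hcard]
  have h0L : (0 : Fin n →₀ ℕ) ∈ L := (Finset.mem_sort r).2 h0
  have ht : L.idxOf (0 : Fin n →₀ ℕ) < L.length := List.idxOf_lt_length_iff.2 h0L
  have h0lt : 0 < L.length := by omega
  rw [List.getD_eq_getElem L 0 h0lt]
  have hsorted : List.Pairwise r L := Finset.pairwise_sort D r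
  have h1 : r (L.get ⟨0, h0lt⟩) (L.get ⟨L.idxOf 0, ht⟩) :=
    hsorted.rel_get_of_le (by exact Fin.mk_le_mk.2 (Nat.zero_le _))
  have h2 : L.get ⟨L.idxOf 0, ht⟩ = 0 := by
    simp only [List.get_eq_getElem]
    exact List.getElem_idxOf ht
  rw [h2] at h1
  have h3 : r 0 (L.get ⟨0, h0lt⟩) := r_zero _
  have := antisymm h1 h3
  simpa using this

set_option maxHeartbeats 2000000 in
lemma step (hn : 0 < n) {K : ℕ} {D : Finset (Fin n →₀ ℕ)} (hV : Valid K D)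
    {j : ℕ} (hj : j + 1 < K) :
    ((E hn K D ⟨j, by omega⟩).2 : ℕ) < j + 1 ∧
      (D.sort r).getD (j + 1) 0
        = (D.sort r).getD ((E hn K D ⟨j, by omega⟩).2 : ℕ) 0
          + Finsupp.single (E hn K D ⟨j, by omega⟩).1 1 := by
  classical
  obtain ⟨hcard, h0, dc⟩ := hV
  set L := D.sort r with hL
  have hlen : L.length = K := by rw [hL, Finset.length_sort, hcard]
  have hj1 : j + 1 < L.length := by omega
  set a := L.getD (j + 1) 0 with haDef
  have haget : a = L[j + 1] := by rw [haDef, List.getD_eq_getElem L 0 hj1]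
  have haL : a ∈ L := by rw [haget]; exact List.getElem_mem _
  have haD : a ∈ D := (Finset.mem_sort r).1 haL
  have ha0 : a ≠ 0 := by
    intro h
    have hz : L.getD 0 0 = 0 := sorted_getD_zero (by omega) hcard h0
    have h0lt : 0 < L.length := by omega
    rw [List.getD_eq_getElem L 0 h0lt] at hz
    have : L[(0:ℕ)] = L[j+1] := by rw [hz, ← haget, h]
    have hnodup : L.Nodup := Finset.sort_nodup D r
    have := (List.Nodup.getElem_inj_iff hnodup).1 this
    omega
  have hex : ∃ i, a i ≠ 0 := by
    by_contra hne
    push_neg at hne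
    exact ha0 (Finsupp.ext fun i => hne i)
  set i := hex.choose with hiDef
  have hi : a i ≠ 0 := hex.choose_spec
  set b := a - Finsupp.single i 1 with hbDef
  have hsle : Finsupp.single i 1 ≤ a := by
    rw [Finsupp.single_le_iff]
    omega
  have hba : b + Finsupp.single i 1 = a := tsub_add_cancel_of_le hsle
  have hbD : b ∈ D := dc a haD b tsub_le_self
  have hbL : b ∈ L := (Finset.mem_sort r).2 hbD
  have ht : L.idxOf b < L.length := List.idxOf_lt_length_iff.2 hbL
  have hgt : L[L.idxOf b] = b := List.getElem_idxOf ht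
  have hdeg : deg a = deg b + 1 := by
    conv_lhs => rw [← hba]
    rw [deg_add, deg_single]
  have hkey : key b < key a := key_lt_of_deg_lt (by omega)
  have htlt : L.idxOf b < j + 1 := by
    by_contra hge
    push_neg at hge
    have hsorted : List.Pairwise r L := Finset.pairwise_sort D r
    have h1 : r (L.get ⟨j + 1, hj1⟩) (L.get ⟨L.idxOf b, ht⟩) :=
      hsorted.rel_get_of_le (Fin.mk_le_mk.2 hge)
    simp only [List.get_eq_getElem] at h1
    rw [hgt, ← haget] at h1
    exact absurd h1 (not_le_of_gt hkey)
  have hspec := E_spec hn K D ⟨j, by omega⟩ hex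
  have hmod : L.idxOf b % (j + 1) = L.idxOf b := Nat.mod_eq_of_lt htlt
  have h2v : ((E hn K D ⟨j, by omega⟩).2 : ℕ) = L.idxOf b := by
    rw [hspec]; exact hmod
  have h1v : (E hn K D ⟨j, by omega⟩).1 = i := by
    rw [hiDef]; exact congrArg Prod.fst hspec
  refine ⟨by rw [h2v]; exact htlt, ?_⟩
  rw [h2v, h1v, ← hba]
  congr 1
  rw [List.getD_eq_getElem L 0 (by omega : L.idxOf b < L.length), hgt]

set_option maxHeartbeats 2000000 in
lemma E_injOn (hn : 0 < n) {K : ℕ} (hK : 0 < K) {D₁ D₂ : Finset (Fin n →₀ ℕ)}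
    (h₁ : Valid K D₁) (h₂ : Valid K D₂) (hE : E hn K D₁ = E hn K D₂) : D₁ = D₂ := by
  classical
  have hlen₁ : (D₁.sort r).length = K := by rw [Finset.length_sort, h₁.1]
  have hlen₂ : (D₂.sort r).length = K := by rw [Finset.length_sort, h₂.1]
  have main : ∀ t, t < K → (D₁.sort r).getD t 0 = (D₂.sort r).getD t 0 := by
    intro t
    induction t using Nat.strong_induction_on with
    | _ t ih =>
      intro htK
      match t with
      | 0 => rw [sorted_getD_zero hK h₁.1 h₁.2.1, sorted_getD_zero hK h₂.1 h₂.2.1]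
      | (j + 1) =>
        obtain ⟨hk₁, hrec₁⟩ := step hn h₁ (j := j) htK
        obtain ⟨hk₂, hrec₂⟩ := step hn h₂ (j := j) htK
        have heq : E hn K D₁ ⟨j, by omega⟩ = E hn K D₂ ⟨j, by omega⟩ := by rw [hE]
        rw [hrec₁, hrec₂, heq, ih ((E hn K D₂ ⟨j, by omega⟩).2 : ℕ) (by rw [← heq]; omega) (by rw [← heq]; omega)]
  have hlists : D₁.sort r = D₂.sort r := by
    apply List.ext_getElem (by rw [hlen₁, hlen₂])
    intro t ht1 ht2
    have h1 := main t (by omega)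
    rwa [List.getD_eq_getElem _ 0 ht1, List.getD_eq_getElem _ 0 ht2] at h1
  have := congrArg List.toFinset hlists
  rwa [Finset.sort_toFinset, Finset.sort_toFinset] at this

end Stmt5Aux



namespace Stmt5LA

variable {F : Type} [Field F] {n : ℕ}

lemma mono_mem_iff (S₀ : Set (Fin n →₀ ℕ)) (a : Fin n →₀ ℕ) :
    (monomial a (1 : F)) ∈ Ideal.span ((fun s => (monomial s (1 : F))) '' S₀) ↔
      ∃ s ∈ S₀, s ≤ a := by
  rw [mem_ideal_span_monomial_image]
  simp [support_monomial]

lemma mem_iff_support (S₀ : Set (Fin n →₀ ℕ)) (p : MvPolynomial (Fin n) F) :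
    p ∈ Ideal.span ((fun s => (monomial s (1 : F))) '' S₀) ↔
      ∀ a ∈ p.support, (monomial a (1 : F)) ∈ Ideal.span ((fun s => (monomial s (1 : F))) '' S₀) := by
  rw [mem_ideal_span_monomial_image]
  exact forall₂_congr fun a _ => (mono_mem_iff S₀ a).symm

lemma delta_card (I : Ideal (MvPolynomial (Fin n) F)) (S₀ : Set (Fin n →₀ ℕ))
    (hI : I = Ideal.span ((fun s => (monomial s (1 : F))) '' S₀))
    {K : ℕ} (hK : K ≠ 0)
    (hrank : Module.finrank F (MvPolynomial (Fin n) F ⧸ I) = K) :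
    {a : Fin n →₀ ℕ | (monomial a (1 : F)) ∉ I}.Finite ∧
      Nat.card {a : Fin n →₀ ℕ | (monomial a (1 : F)) ∉ I} = K := by
  classical
  set Δ : Set (Fin n →₀ ℕ) := {a | (monomial a (1 : F)) ∉ I} with hΔ
  set B := MvPolynomial.basisMonomials (Fin n) F with hB
  set φ : MvPolynomial (Fin n) F →ₗ[F] (Δ →₀ F) :=
    (Finsupp.lsubtypeDomain (R := F) (M := F) Δ).comp B.repr.toLinearMap with hφ
  have hrepr : ∀ (p : MvPolynomial (Fin n) F) (a : Fin n →₀ ℕ),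
      (B.repr p) a = MvPolynomial.coeff a p := fun _ _ => rfl
  have hφ_apply : ∀ (p : MvPolynomial (Fin n) F) (x : Δ), φ p x = MvPolynomial.coeff x.1 p := by
    intro p x
    rw [hφ]
    simp only [LinearMap.comp_apply, Finsupp.lsubtypeDomain_apply, LinearEquiv.coe_toLinearMap]
    rw [Finsupp.subtypeDomain_apply, hrepr]
  have hmemI : ∀ p : MvPolynomial (Fin n) F,
      p ∈ I ↔ ∀ a ∈ p.support, (monomial a (1 : F)) ∈ I := by
    rw [hI]; exact mem_iff_support S₀
  have hker : LinearMap.ker φ = Submodule.restrictScalars F I := by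
    ext p
    rw [LinearMap.mem_ker, Submodule.restrictScalars_mem]
    constructor
    · intro h
      rw [hmemI]
      intro a ha
      by_contra hmem
      have haΔ : a ∈ Δ := hmem
      have := congrArg (fun f => f ⟨a, haΔ⟩) h
      simp only [Finsupp.coe_zero, Pi.zero_apply] at this
      rw [hφ_apply] at this
      exact (MvPolynomial.mem_support_iff.1 ha) this
    · intro h
      ext x
      rw [hφ_apply]
      simp only [Finsupp.coe_zero, Pi.zero_apply]
      by_contra hc
      have hxsupp : x.1 ∈ p.support := MvPolynomial.mem_support_iff.2 hc
      exact x.2 (((hmemI p).1 h) x.1 hxsupp)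
  have hsingle : ∀ (a : Fin n →₀ ℕ) (ha : a ∈ Δ) (c : F),
      φ (monomial a c) = Finsupp.single (⟨a, ha⟩ : Δ) c := by
    intro a ha c
    ext x
    rw [hφ_apply, MvPolynomial.coeff_monomial, Finsupp.single_apply]
    by_cases h : (⟨a, ha⟩ : Δ) = x
    · rw [if_pos h, if_pos (congrArg Subtype.val h)]
    · rw [if_neg h, if_neg (fun hh => h (Subtype.ext hh))]
  have hsurj : Function.Surjective φ := by
    intro y
    induction y using Finsupp.induction with
    | zero => exact ⟨0, map_zero φ⟩
    | single_add x c f _ _ ih =>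
      obtain ⟨p, hp⟩ := ih
      exact ⟨monomial x.1 c + p, by rw [map_add, hp, hsingle x.1 x.2 c]⟩
  have e : (MvPolynomial (Fin n) F ⧸ I) ≃ₗ[F] (Δ →₀ F) :=
    ((Submodule.Quotient.restrictScalarsEquiv F I).symm.trans
      (Submodule.quotEquivOfEq _ _ hker.symm)).trans
      (LinearMap.quotKerEquivOfSurjective φ hsurj)
  have hrank2 : Module.rank F (MvPolynomial (Fin n) F ⧸ I) = Cardinal.mk Δ := by
    rw [e.rank_eq, rank_finsupp_self']
  have hfr : Module.finrank F (MvPolynomial (Fin n) F ⧸ I) = Cardinal.toNat (Cardinal.mk Δ) := by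
    rw [Module.finrank, hrank2]
  have hcard : Cardinal.mk Δ = K := by
    rw [← Cardinal.toNat_eq_iff hK, ← hfr, hrank]
  have hfin : Δ.Finite := by
    rw [← Set.finite_coe_iff]
    have : Cardinal.mk Δ < Cardinal.aleph0 := by rw [hcard]; exact Cardinal.nat_lt_aleph0 K
    exact Cardinal.lt_aleph0_iff_finite.1 this
  refine ⟨hfin, ?_⟩
  rw [Nat.card, hcard]
  simp

end Stmt5LA


namespace Stmt5Glue

open Stmt5Aux Stmt5LA

variable {F : Type} [Field F] {n : ℕ}

/-- Turn a set into a finset (junk value if infinite). -/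
noncomputable def toF (s : Set (Fin n →₀ ℕ)) : Finset (Fin n →₀ ℕ) :=
  @dite _ s.Finite (Classical.dec _) (fun h => h.toFinset) (fun _ => ∅)

lemma toF_eq {s : Set (Fin n →₀ ℕ)} (h : s.Finite) : toF s = h.toFinset := dif_pos h

lemma fact_le_pow : ∀ t : ℕ, (t + 1).factorial ≤ (t + 1) ^ t := by
  intro t
  induction t with
  | zero => simp
  | succ t ih =>
    calc (t + 2).factorial = (t + 2) * (t + 1).factorial := rfl
    _ ≤ (t + 2) * (t + 1) ^ t := Nat.mul_le_mul_left _ ih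
    _ ≤ (t + 2) * (t + 2) ^ t := Nat.mul_le_mul_left _ (Nat.pow_le_pow_left (by omega) t)
    _ = (t + 2) ^ (t + 1) := (pow_succ' (t + 2) t).symm

lemma arith (n K : ℕ) (hn : 1 ≤ n) (hK : 2 ≤ K) :
    n ^ (K - 1) * (K - 1).factorial
      ≤ (K + n - 2) ^ ((n - 1) * (K - 1)) * (2 * K - 3) ^ (K - 2) := by
  have hA : n ≤ (K + n - 2) ^ (n - 1) := by
    rcases Nat.eq_or_lt_of_le hn with h | h
    · simp [← h]
    · have h2 : 2 ≤ n := h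
      calc n ≤ n ^ (n - 1) := Nat.le_self_pow (by omega) n
      _ ≤ (K + n - 2) ^ (n - 1) := Nat.pow_le_pow_left (by omega) _
  have hA' : n ^ (K - 1) ≤ (K + n - 2) ^ ((n - 1) * (K - 1)) := by
    rw [pow_mul]
    exact Nat.pow_le_pow_left hA _
  have hB : (K - 1).factorial ≤ (2 * K - 3) ^ (K - 2) := by
    have h1 : K - 1 = (K - 2) + 1 := by omega
    calc (K - 1).factorial = ((K - 2) + 1).factorial := by rw [h1]
    _ ≤ ((K - 2) + 1) ^ (K - 2) := fact_le_pow _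
    _ ≤ (2 * K - 3) ^ (K - 2) := Nat.pow_le_pow_left (by omega) _
  exact Nat.mul_le_mul hA' hB

lemma card_target (n K : ℕ) :
    Fintype.card (∀ j : Fin (K - 1), Fin n × Fin (j.1 + 1))
      = n ^ (K - 1) * (K - 1).factorial := by
  rw [Fintype.card_pi]
  have h1 : ∀ j : Fin (K - 1), Fintype.card (Fin n × Fin (j.1 + 1)) = n * (j.1 + 1) := by
    intro j; rw [Fintype.card_prod, Fintype.card_fin, Fintype.card_fin]
  rw [Finset.prod_congr rfl (fun j _ => h1 j), Finset.prod_mul_distrib,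
    Finset.prod_const, Finset.card_univ, Fintype.card_fin]
  congr 1
  rw [Fin.prod_univ_eq_prod_range (fun j => j + 1) (K - 1)]
  exact Finset.prod_range_add_one_eq_factorial (K - 1)

end Stmt5Glue

/-- For `K ≥ 2` and positive integers `m_1,…,m_n`, the number of monomial ideals `I` with
`dim F[X]/I = K`, `X_i^{m_i} ∈ I` and `X_i^{m_i-1} ∉ I` for all `i`, is at most
`(K+n-2)^{(n-1)(K-1)} (2K-3)^{K-2}`. -/
theorem statement_5 (F : Type) [Field F] (n K : ℕ) (hn : 1 ≤ n) (hK : 2 ≤ K)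
    (m : Fin n → ℕ) (hm : ∀ i, 1 ≤ m i) :
    {I : Ideal (MvPolynomial (Fin n) F) | IsMonomialIdeal I ∧
        Module.finrank F (MvPolynomial (Fin n) F ⧸ I) = K ∧
        ∀ i, (X i : MvPolynomial (Fin n) F) ^ m i ∈ I ∧
          (X i : MvPolynomial (Fin n) F) ^ (m i - 1) ∉ I}.ncard
      ≤ (K + n - 2) ^ ((n - 1) * (K - 1)) * (2 * K - 3) ^ (K - 2) := by
  classical
  open Stmt5Aux Stmt5LA Stmt5Glue in
  have hn' : 0 < n := hn
  set S : Set (Ideal (MvPolynomial (Fin n) F)) :=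
    {I : Ideal (MvPolynomial (Fin n) F) | IsMonomialIdeal I ∧
        Module.finrank F (MvPolynomial (Fin n) F ⧸ I) = K ∧
        ∀ i, (X i : MvPolynomial (Fin n) F) ^ m i ∈ I ∧
          (X i : MvPolynomial (Fin n) F) ^ (m i - 1) ∉ I} with hS
  set f : Ideal (MvPolynomial (Fin n) F) → (∀ j : Fin (K - 1), Fin n × Fin (j.1 + 1)) :=
    fun I => Stmt5Aux.E hn' K (Stmt5Glue.toF {a : Fin n →₀ ℕ | (monomial a (1 : F)) ∉ I}) with hf
  -- key properties for members of S
  have hprops : ∀ I ∈ S, Stmt5Aux.Valid K (Stmt5Glue.toF {a : Fin n →₀ ℕ | (monomial a (1 : F)) ∉ I}) := by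
    intro I hI
    obtain ⟨⟨S₀, hspan⟩, hrank, -⟩ := hI
    obtain ⟨hfin, hcard⟩ := Stmt5LA.delta_card I S₀ hspan (by omega) hrank
    set Δ : Set (Fin n →₀ ℕ) := {a | (monomial a (1 : F)) ∉ I} with hΔ
    have hDeq : Stmt5Glue.toF Δ = hfin.toFinset := Stmt5Glue.toF_eq hfin
    have hdc : ∀ a ∈ Δ, ∀ b ≤ a, b ∈ Δ := by
      intro a ha b hba
      intro hbI
      apply ha
      rw [hspan, Stmt5LA.mono_mem_iff]
      rw [hspan, Stmt5LA.mono_mem_iff] at hbI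
      obtain ⟨s, hs, hsb⟩ := hbI
      exact ⟨s, hs, le_trans hsb hba⟩
    have hcard' : (Stmt5Glue.toF Δ).card = K := by
      rw [hDeq, ← Set.ncard_eq_toFinset_card Δ hfin, ← Nat.card_coe_set_eq, hcard]
    have h0 : (0 : Fin n →₀ ℕ) ∈ Δ := by
      rcases Set.eq_empty_or_nonempty Δ with h | ⟨a, ha⟩
      · exfalso
        rw [h] at hcard
        simp at hcard
        omega
      · exact hdc a ha 0 zero_le
    refine ⟨hcard', ?_, ?_⟩
    · rw [hDeq, Set.Finite.mem_toFinset]; exact h0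
    · intro a ha b hba
      rw [hDeq, Set.Finite.mem_toFinset] at *
      exact hdc a ha b hba
  -- injectivity
  have hinj : Set.InjOn f S := by
    intro I₁ h₁ I₂ h₂ hfeq
    have hD : Stmt5Glue.toF {a : Fin n →₀ ℕ | (monomial a (1 : F)) ∉ I₁}
        = Stmt5Glue.toF {a : Fin n →₀ ℕ | (monomial a (1 : F)) ∉ I₂} :=
      Stmt5Aux.E_injOn hn' (by omega) (hprops I₁ h₁) (hprops I₂ h₂) hfeq
    obtain ⟨⟨S₁, hspan₁⟩, hrank₁, -⟩ := h₁
    obtain ⟨⟨S₂, hspan₂⟩, hrank₂, -⟩ := h₂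
    obtain ⟨hfin₁, -⟩ := Stmt5LA.delta_card I₁ S₁ hspan₁ (by omega) hrank₁
    obtain ⟨hfin₂, -⟩ := Stmt5LA.delta_card I₂ S₂ hspan₂ (by omega) hrank₂
    rw [Stmt5Glue.toF_eq hfin₁, Stmt5Glue.toF_eq hfin₂] at hD
    have hΔeq : {a : Fin n →₀ ℕ | (monomial a (1 : F)) ∉ I₁}
        = {a : Fin n →₀ ℕ | (monomial a (1 : F)) ∉ I₂} := by
      rw [← Set.Finite.coe_toFinset hfin₁, ← Set.Finite.coe_toFinset hfin₂, hD]
    have hmono : ∀ a : Fin n →₀ ℕ, (monomial a (1 : F)) ∈ I₁ ↔ (monomial a (1 : F)) ∈ I₂ := by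
      intro a
      have := Set.ext_iff.1 hΔeq a
      simp only [Set.mem_setOf_eq] at this
      tauto
    ext p
    rw [hspan₁, Stmt5LA.mem_iff_support, hspan₂, Stmt5LA.mem_iff_support]
    refine forall₂_congr fun a _ => ?_
    rw [← hspan₁, ← hspan₂]
    exact hmono a
  -- conclude
  calc S.ncard ≤ (Set.univ : Set (∀ j : Fin (K - 1), Fin n × Fin (j.1 + 1))).ncard :=
        Set.ncard_le_ncard_of_injOn f (fun a _ => Set.mem_univ _) hinj Set.finite_univ
  _ = Fintype.card (∀ j : Fin (K - 1), Fin n × Fin (j.1 + 1)) := by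
        rw [Set.ncard_univ, Nat.card_eq_fintype_card]
  _ = n ^ (K - 1) * (K - 1).factorial := Stmt5Glue.card_target n K
  _ ≤ (K + n - 2) ^ ((n - 1) * (K - 1)) * (2 * K - 3) ^ (K - 2) := Stmt5Glue.arith n K hn hK
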